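/- Let 𝕏 be an agenda over m issues, F an aggregation mechanism for 𝕏 over n voters, j an issue, and ε ≥ 0. If DI^j(F) ≥ ε, then every aggregation mechanism H for 𝕏 over n voters with DI^j(H) = 0 satisfies d(F,H) ≥ ε/2. -/
import Mathlib


namespace JudgementAggregation

open Finset

open Classical in
noncomputable def prob {α : Type*} (s : Finset α) (P : α → Prop) : ℝ :=
  ((s.filter P).card : ℝ) / s.card

abbrev Opinion (m : ℕ) := Fin m → Bool
abbrev Profile (m n : ℕ) := Fin n → Opinion m
abbrev Mechanism (m n : ℕ) := Profile m n → Opinion m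

/-- The column of all voters' answers on issue `j`. -/
def col {m n : ℕ} (Y : Profile m n) (j : Fin m) : Fin n → Bool := fun i => Y i j

/-- The set of profiles all of whose rows are consistent opinions (i.e. the set 𝕏^n). -/
def profiles {m : ℕ} (X : Finset (Opinion m)) (n : ℕ) : Finset (Profile m n) :=
  Fintype.piFinset fun _ => X

/-- Inconsistency index: probability (uniform over 𝕏^n) that the aggregated opinion
is inconsistent. -/
noncomputable def IC {m n : ℕ} (X : Finset (Opinion m)) (F : Mechanism m n) : ℝ :=
  prob (profiles X n) (fun Y => F Y ∉ X)

/-- Distance between mechanisms: probability (uniform over 𝕏^n) of disagreement. -/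
noncomputable def mdist {m n : ℕ} (X : Finset (Opinion m)) (F G : Mechanism m n) : ℝ :=
  prob (profiles X n) (fun Y => F Y ≠ G Y)

/-- `F` is independent: on consistent profiles, each issue is aggregated from its own column. -/
def Independent {m n : ℕ} (X : Finset (Opinion m)) (F : Mechanism m n) : Prop :=
  ∃ f : Fin m → (Fin n → Bool) → Bool, ∀ Y ∈ profiles X n, ∀ j, F Y j = f j (col Y j)

open Classical in
/-- Dependency index of issue `j`:
`E_X [ Pr_Y [ (F X)^j ≠ (F Y)^j | Y^j = X^j ] ]`, everything uniform over 𝕏^n. -/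
noncomputable def DIj {m n : ℕ} (X : Finset (Opinion m)) (F : Mechanism m n) (j : Fin m) : ℝ :=
  (∑ Y ∈ profiles X n,
      prob ((profiles X n).filter (fun Z => col Z j = col Y j)) (fun Z => F Z j ≠ F Y j))
    / ((profiles X n).card : ℝ)

/-- Dependency index: the maximum of the issue-wise dependency indices. -/
noncomputable def DI {m n : ℕ} (X : Finset (Opinion m)) (F : Mechanism m n) : ℝ :=
  ⨆ j : Fin m, DIj X F j


section Aux
variable {m n : ℕ}

lemma prob_nonneg {α : Type*} (s : Finset α) (P : α → Prop) : 0 ≤ prob s P := by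
  unfold prob; positivity

lemma prob_le_one {α : Type*} (s : Finset α) (P : α → Prop) : prob s P ≤ 1 := by
  classical
  unfold prob
  rcases Nat.eq_zero_or_pos s.card with h | h
  · simp [h]
  · rw [div_le_one (by exact_mod_cast h)]
    exact_mod_cast Finset.card_filter_le s _

lemma prob_mono {α : Type*} (s : Finset α) {P Q : α → Prop}
    (h : ∀ a ∈ s, P a → Q a) : prob s P ≤ prob s Q := by
  classical
  unfold prob
  rcases Nat.eq_zero_or_pos s.card with hc | hc
  · simp [Finset.card_eq_zero.mp hc]
  · rw [div_le_div_iff_of_pos_right (by exact_mod_cast hc)]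
    exact_mod_cast Finset.card_le_card (fun a ha => by
      simp only [Finset.mem_filter] at ha ⊢
      exact ⟨ha.1, h a ha.1 ha.2⟩)

lemma prob_eq_zero_forall {α : Type*} {s : Finset α} {P : α → Prop} (h : prob s P = 0)
    (hs : s.Nonempty) : ∀ a ∈ s, ¬ P a := by
  classical
  intro a ha hP
  unfold prob at h
  rw [div_eq_zero_iff] at h
  rcases h with h | h
  · have h0 : s.filter P = ∅ := Finset.card_eq_zero.mp (by exact_mod_cast h)
    rw [Finset.eq_empty_iff_forall_notMem] at h0
    exact h0 a (Finset.mem_filter.mpr ⟨ha, hP⟩)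
  · exact absurd h (by exact_mod_cast (Finset.card_pos.mpr hs).ne')

open Classical in
/-- Summing the conditional cell-probabilities of an event recovers its count. -/
lemma sum_prob_cell (S : Finset (Profile m n)) (j : Fin m) (P : Profile m n → Prop) :
    ∑ Y ∈ S, prob (S.filter (fun Z => col Z j = col Y j)) P
      = ((S.filter P).card : ℝ) := by
  have hcell : ∀ Y Z : Profile m n, col Z j = col Y j →
      S.filter (fun W => col W j = col Y j) = S.filter (fun W => col W j = col Z j) := by
    intro Y Z h
    apply Finset.filter_congr
    intro W _
    rw [h]
  have key : ∀ Y ∈ S,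
      prob (S.filter (fun Z => col Z j = col Y j)) P
        = ∑ Z ∈ S, if col Z j = col Y j then
            (if P Z then (1:ℝ) else 0)
              / ((S.filter (fun W => col W j = col Y j)).card : ℝ) else 0 := by
    intro Y hY
    rw [Finset.sum_ite, Finset.sum_const_zero, add_zero, ← Finset.sum_div]
    unfold prob
    congr 1
    rw [Finset.filter_filter, Finset.card_filter]
    push_cast
    rw [Finset.sum_filter]
    exact Finset.sum_congr rfl (fun x _ => by rw [ite_and])
  rw [Finset.sum_congr rfl key, Finset.sum_comm]
  rw [Finset.card_filter]
  push_cast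
  apply Finset.sum_congr rfl
  intro Z hZ
  have h1 : ∀ Y ∈ S, (if col Z j = col Y j then
        (if P Z then (1:ℝ) else 0)
          / ((S.filter (fun W => col W j = col Y j)).card : ℝ) else 0)
      = if col Y j = col Z j then
        (if P Z then (1:ℝ) else 0)
          / ((S.filter (fun W => col W j = col Z j)).card : ℝ) else 0 := by
    intro Y hY
    by_cases h : col Z j = col Y j
    · rw [if_pos h, if_pos h.symm, hcell Y Z h]
    · rw [if_neg h, if_neg (fun h' => h h'.symm)]
  rw [Finset.sum_congr rfl h1, ← Finset.sum_filter, Finset.sum_const]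
  have hZmem : Z ∈ S.filter (fun W => col W j = col Z j) :=
    Finset.mem_filter.mpr ⟨hZ, rfl⟩
  have hcpos : (0:ℝ) < ((S.filter (fun W => col W j = col Z j)).card : ℝ) := by
    exact_mod_cast Finset.card_pos.mpr ⟨Z, hZmem⟩
  rw [nsmul_eq_mul]
  by_cases hP : P Z
  · rw [if_pos hP, mul_one_div, div_self hcpos.ne']
  · rw [if_neg hP]
    simp

end Aux

/-- if `DI^j(F) ≥ ε` then `F` is `ε/2`-far from every mechanism with `DI^j = 0`. -/
theorem DIj_ge_far (m n : ℕ) (X : Finset (Opinion m)) (hne : X.Nonempty)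
    (F : Mechanism m n) (j : Fin m) (ε : ℝ) (hε : 0 ≤ ε)
    (hDI : ε ≤ DIj X F j) :
    ∀ H : Mechanism m n, DIj X H j = 0 → ε / 2 ≤ mdist X F H := by
  intro H hH
  classical
  have hSne : (profiles X n).Nonempty := by
    obtain ⟨x, hx⟩ := hne
    exact ⟨fun _ => x, by simp [profiles, Fintype.mem_piFinset, hx]⟩
  have hNpos : (0:ℝ) < ((profiles X n).card : ℝ) := by
    exact_mod_cast Finset.card_pos.mpr hSne
  -- H aggregates issue j identically within each cell
  have hHconst : ∀ Y ∈ profiles X n,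
      ∀ Z ∈ (profiles X n).filter (fun W => col W j = col Y j), H Z j = H Y j := by
    intro Y hY Z hZ
    have hsum : ∑ Y ∈ profiles X n,
        prob ((profiles X n).filter (fun Z => col Z j = col Y j))
          (fun Z => H Z j ≠ H Y j) = 0 := by
      have h0 := hH
      unfold DIj at h0
      rw [div_eq_zero_iff] at h0
      rcases h0 with h | h
      · exact h
      · exact absurd h hNpos.ne'
    have hterm : prob ((profiles X n).filter (fun Z => col Z j = col Y j))
        (fun Z => H Z j ≠ H Y j) = 0 :=
      (Finset.sum_eq_zero_iff_of_nonneg (fun Y _ => prob_nonneg _ _)).mp hsum Y hY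
    have hYmem : Y ∈ (profiles X n).filter (fun W => col W j = col Y j) :=
      Finset.mem_filter.mpr ⟨hY, rfl⟩
    have := prob_eq_zero_forall hterm ⟨Y, hYmem⟩ Z hZ
    simpa using this
  -- pointwise bound on each cell probability
  have hbound : ∀ Y ∈ profiles X n,
      prob ((profiles X n).filter (fun Z => col Z j = col Y j)) (fun Z => F Z j ≠ F Y j)
        ≤ prob ((profiles X n).filter (fun Z => col Z j = col Y j)) (fun Z => F Z j ≠ H Z j)
          + (if F Y j ≠ H Y j then (1:ℝ) else 0) := by
    intro Y hY
    by_cases hFH : F Y j = H Y j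
    · rw [if_neg (by simpa using hFH), add_zero]
      apply prob_mono
      intro Z hZ hne' heq
      exact hne' (by rw [heq, hHconst Y hY Z hZ, ← hFH])
    · rw [if_pos hFH]
      have h1 := prob_le_one ((profiles X n).filter (fun Z => col Z j = col Y j))
        (fun Z => F Z j ≠ F Y j)
      have h0 := prob_nonneg ((profiles X n).filter (fun Z => col Z j = col Y j))
        (fun Z => F Z j ≠ H Z j)
      linarith
  -- summing the bound
  have hsum1 : ∑ Y ∈ profiles X n,
      prob ((profiles X n).filter (fun Z => col Z j = col Y j)) (fun Z => F Z j ≠ F Y j)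
        ≤ 2 * (((profiles X n).filter (fun Y => F Y j ≠ H Y j)).card : ℝ) := by
    calc ∑ Y ∈ profiles X n,
        prob ((profiles X n).filter (fun Z => col Z j = col Y j)) (fun Z => F Z j ≠ F Y j)
        ≤ ∑ Y ∈ profiles X n,
            (prob ((profiles X n).filter (fun Z => col Z j = col Y j))
                (fun Z => F Z j ≠ H Z j)
              + (if F Y j ≠ H Y j then (1:ℝ) else 0)) := Finset.sum_le_sum hbound
      _ = (((profiles X n).filter (fun Z => F Z j ≠ H Z j)).card : ℝ)
            + (((profiles X n).filter (fun Y => F Y j ≠ H Y j)).card : ℝ) := by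
          rw [Finset.sum_add_distrib, sum_prob_cell (profiles X n) j (fun Z => F Z j ≠ H Z j)]
          simp only [Finset.sum_boole, Finset.filter_congr_decidable]
          congr!
      _ = 2 * (((profiles X n).filter (fun Y => F Y j ≠ H Y j)).card : ℝ) := by ring
  have hDF : DIj X F j ≤ 2 * prob (profiles X n) (fun Y => F Y j ≠ H Y j) := by
    have e1 : prob (profiles X n) (fun Y => F Y j ≠ H Y j)
        = (((profiles X n).filter (fun Y => F Y j ≠ H Y j)).card : ℝ)
            / ((profiles X n).card : ℝ) := by
      unfold prob
      congr!
    unfold DIj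
    rw [e1, ← mul_div_assoc]
    exact div_le_div_of_nonneg_right hsum1 hNpos.le
  have hstep : prob (profiles X n) (fun Y => F Y j ≠ H Y j) ≤ mdist X F H := by
    unfold mdist
    apply prob_mono
    intro Y _ hne' heq
    exact hne' (congrFun heq j)
  have hfin : ε ≤ 2 * mdist X F H := by
    calc ε ≤ DIj X F j := hDI
      _ ≤ 2 * prob (profiles X n) (fun Y => F Y j ≠ H Y j) := hDF
      _ ≤ 2 * mdist X F H := by linarith
  linarith


end JudgementAggregation
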